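/- In the random-sum setup, assume additionally that P(i ∈ {Y_1, …, Y_N}) > 0 for every i ∈ E (that is, with positive probability some index n with 1 ≤ n ≤ N has Y_n = i). Then there exist κ ≥ 0 and q > 0 such that for all z ≥ 0, P(Z ≥ z) ≥ q · max_{i∈E} Π_i([z + κ, ∞)). -/

import Mathlib

open MeasureTheory Set

/-- The random-sum setup: a family `X i n` of independent real random variables with
`X i n ∼ law i`, an `E`-valued sequence `Y` and an `ℕ`-valued variable `N` such that
the pair `((Y n)ₙ, N)` is independent of the whole family `(X i n)`. -/
structure RandomSumSetup (E : Type*) [MeasurableSpace E] (Ω : Type*) [MeasurableSpace Ω]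
    (P : Measure Ω) (law : E → Measure ℝ) where
  X : E → ℕ → Ω → ℝ
  Y : ℕ → Ω → E
  N : Ω → ℕ
  measX : ∀ i n, Measurable (X i n)
  measY : ∀ n, Measurable (Y n)
  measN : Measurable N
  distX : ∀ i n, P.map (X i n) = law i
  indepX : ProbabilityTheory.iIndepFun
    (fun (p : E × ℕ) ω => X p.1 p.2 ω) P
  indepYN : ProbabilityTheory.IndepFun (fun ω => ((fun n => Y n ω), N ω))
    (fun ω (p : E × ℕ) => X p.1 p.2 ω) P

/-- The random sum `Z = Σ_{n=1}^{N} X^{Y_n, n}` (empty sum `= 0`). -/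
noncomputable def RandomSumSetup.Z {E : Type*} [MeasurableSpace E] {Ω : Type*}
    [MeasurableSpace Ω] {P : Measure Ω} {law : E → Measure ℝ}
    (S : RandomSumSetup E Ω P law) : Ω → ℝ :=
  fun ω => ∑ n ∈ Finset.Icc 1 (S.N ω), S.X (S.Y n ω) n ω


/-- In the random-sum setup, if each state `i ∈ E` is visited with positive probability
among `Y_1, …, Y_N`, then there exist `κ ≥ 0` and `q > 0` such that for all `z ≥ 0`,
`P(Z ≥ z) ≥ q · max_i Π_i([z + κ, ∞))`. -/
theorem randomSum_upper_tail_bound {E : Type*} [Fintype E] [Nonempty E] [MeasurableSpace E]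
    [MeasurableSingletonClass E] {Ω : Type*} [MeasurableSpace Ω] (P : Measure Ω)
    [IsProbabilityMeasure P] (law : E → Measure ℝ)
    (hlaw : ∀ i, IsProbabilityMeasure (law i)) (S : RandomSumSetup E Ω P law)
    (hvisit : ∀ i : E, 0 < P {ω | ∃ n, 1 ≤ n ∧ n ≤ S.N ω ∧ S.Y n ω = i}) :
    ∃ κ : ℝ, 0 ≤ κ ∧ ∃ q : ℝ, 0 < q ∧ ∀ z : ℝ, 0 ≤ z →
      ENNReal.ofReal q * ⨆ i, law i (Ici (z + κ)) ≤ P {ω | z ≤ S.Z ω} := by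
  classical
  -- Step 1: for each i, find a fixed length m, index n₀ and trajectory y with
  -- positive probability.
  have key : ∀ i : E, ∃ (m n₀ : ℕ) (y : ℕ → E), 1 ≤ n₀ ∧ n₀ ≤ m ∧ y n₀ = i ∧
      P {ω | S.N ω = m ∧ ∀ n ∈ Finset.Icc 1 m, S.Y n ω = y n} ≠ 0 := by
    intro i
    have hA : ∃ m : ℕ, P {ω | S.N ω = m ∧ ∃ n, 1 ≤ n ∧ n ≤ m ∧ S.Y n ω = i} ≠ 0 := by
      by_contra h
      push_neg at h
      have h0 : P (⋃ m : ℕ, {ω | S.N ω = m ∧ ∃ n, 1 ≤ n ∧ n ≤ m ∧ S.Y n ω = i}) = 0 :=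
        measure_iUnion_null h
      have hsub : {ω | ∃ n, 1 ≤ n ∧ n ≤ S.N ω ∧ S.Y n ω = i} ⊆
          ⋃ m : ℕ, {ω | S.N ω = m ∧ ∃ n, 1 ≤ n ∧ n ≤ m ∧ S.Y n ω = i} := by
        intro ω hω
        exact mem_iUnion.2 ⟨S.N ω, rfl, hω⟩
      exact (hvisit i).ne' (le_antisymm ((measure_mono hsub).trans h0.le) zero_le)
    obtain ⟨mi, hmi⟩ := hA
    have hB : ∃ v : Fin (mi + 1) → E,
        P ({ω | S.N ω = mi ∧ ∃ n, 1 ≤ n ∧ n ≤ mi ∧ S.Y n ω = i} ∩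
          {ω | ∀ n : Fin (mi + 1), S.Y n ω = v n}) ≠ 0 := by
      by_contra h
      push_neg at h
      have h0 := measure_iUnion_null h
      apply hmi
      refine le_antisymm ((measure_mono ?_).trans h0.le) zero_le
      intro ω hω
      exact mem_iUnion.2 ⟨fun nn => S.Y nn ω, hω, fun nn => rfl⟩
    obtain ⟨v, hv⟩ := hB
    obtain ⟨ω₀, hω₀⟩ := nonempty_of_measure_ne_zero hv
    obtain ⟨hN0, n₀, hn1, hn2, hni⟩ := hω₀.1
    refine ⟨mi, n₀, fun n => S.Y n ω₀, hn1, hn2, hni, ?_⟩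
    intro h0
    apply hv
    refine le_antisymm ((measure_mono ?_).trans h0.le) zero_le
    rintro ω ⟨⟨hNω, -⟩, hYω⟩
    refine ⟨hNω, fun n hn => ?_⟩
    have hlt : n < mi + 1 := Nat.lt_succ_of_le (Finset.mem_Icc.1 hn).2
    have h1 : S.Y n ω = v ⟨n, hlt⟩ := hYω ⟨n, hlt⟩
    have h2 : S.Y n ω₀ = v ⟨n, hlt⟩ := hω₀.2 ⟨n, hlt⟩
    exact h1.trans h2.symm
  choose m n₀ y hn₀1 hn₀2 hyn₀ hBpos using key
  -- The "rest" sum and its tail bound.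
  have hk : ∀ i : E, ∃ kk : ℕ,
      P {ω | -(kk : ℝ) ≤ ∑ n ∈ (Finset.Icc 1 (m i)).erase (n₀ i), S.X (y i n) n ω} ≠ 0 := by
    intro i
    by_contra h
    push_neg at h
    have h0 := measure_iUnion_null h
    have huniv : (⋃ kk : ℕ,
        {ω | -(kk : ℝ) ≤ ∑ n ∈ (Finset.Icc 1 (m i)).erase (n₀ i), S.X (y i n) n ω}) = univ := by
      ext ω
      simp only [mem_iUnion, mem_setOf_eq, mem_univ, iff_true]
      refine ⟨⌈|∑ n ∈ (Finset.Icc 1 (m i)).erase (n₀ i), S.X (y i n) n ω|⌉₊, ?_⟩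
      have h1 := Nat.le_ceil |∑ n ∈ (Finset.Icc 1 (m i)).erase (n₀ i), S.X (y i n) n ω|
      have h2 := neg_abs_le (∑ n ∈ (Finset.Icc 1 (m i)).erase (n₀ i), S.X (y i n) n ω)
      linarith
    rw [huniv, measure_univ] at h0
    exact one_ne_zero h0
  choose k hkpos using hk
  set κ : ℝ := ((Finset.univ.sup k : ℕ) : ℝ) with hκdef
  have hκ0 : (0 : ℝ) ≤ κ := Nat.cast_nonneg _
  -- the constants
  set B : E → Set Ω := fun i => {ω | S.N ω = m i ∧ ∀ n ∈ Finset.Icc 1 (m i), S.Y n ω = y i n}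
    with hBdef
  set a : E → ENNReal := fun i => P (B i) *
    P {ω | -(k i : ℝ) ≤ ∑ n ∈ (Finset.Icc 1 (m i)).erase (n₀ i), S.X (y i n) n ω} with hadef
  have ha0 : ∀ i, a i ≠ 0 := fun i => mul_ne_zero (hBpos i) (hkpos i)
  have hatop : ∀ i, a i ≠ ⊤ := fun i =>
    (lt_of_le_of_lt (le_trans (mul_le_mul' prob_le_one prob_le_one) (by simp))
      (by norm_num : (1 : ENNReal) < ⊤)).ne
  obtain ⟨j, -, hj⟩ := Finset.exists_min_image Finset.univ a ⟨Classical.arbitrary E,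
    Finset.mem_univ _⟩
  refine ⟨κ, hκ0, (a j).toReal, ENNReal.toReal_pos (ha0 j) (hatop j), ?_⟩
  intro z hz
  rw [ENNReal.ofReal_toReal (hatop j), ENNReal.mul_iSup]
  refine iSup_le fun i => ?_
  -- the main estimate for a single i
  have hki : (k i : ℝ) ≤ κ := by
    rw [hκdef]
    exact_mod_cast Finset.le_sup (Finset.mem_univ i)
  have hRsub : {ω | -(k i : ℝ) ≤ ∑ n ∈ (Finset.Icc 1 (m i)).erase (n₀ i), S.X (y i n) n ω} ⊆
      {ω | -κ ≤ ∑ n ∈ (Finset.Icc 1 (m i)).erase (n₀ i), S.X (y i n) n ω} := by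
    intro ω hω
    simp only [mem_setOf_eq] at hω ⊢
    linarith
  -- law as a probability about X i (n₀ i)
  have hlawX : law i (Ici (z + κ)) = P {ω | z + κ ≤ S.X i (n₀ i) ω} := by
    rw [← S.distX i (n₀ i), Measure.map_apply (S.measX i (n₀ i)) measurableSet_Ici]
    rfl
  -- independence of the single term and the rest
  set f : E × ℕ → Ω → ℝ := fun p ω => S.X p.1 p.2 ω with hfdef
  set t : Finset ℕ := (Finset.Icc 1 (m i)).erase (n₀ i) with htdef
  set tEN : Finset (E × ℕ) := t.image (fun n => (y i n, n)) with htENdef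
  have hnotmem : (i, n₀ i) ∉ tEN := by
    intro h
    obtain ⟨n, hn, heq⟩ := Finset.mem_image.1 h
    have : n = n₀ i := congrArg Prod.snd heq
    exact (Finset.mem_erase.1 hn).1 this
  have hIndep : ProbabilityTheory.IndepFun (∑ p ∈ tEN, f p) (f (i, n₀ i)) P :=
    S.indepX.indepFun_finsetSum_of_notMem (fun p => S.measX p.1 p.2) hnotmem
  have hRfun : ∀ ω, (∑ p ∈ tEN, f p) ω = ∑ n ∈ t, S.X (y i n) n ω := by
    intro ω
    rw [Finset.sum_apply]
    rw [htENdef, Finset.sum_image (fun x _ xx _ h => congrArg Prod.snd h)]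
  have hmul := hIndep.measure_inter_preimage_eq_mul (Ici (-κ)) (Ici (z + κ))
    measurableSet_Ici measurableSet_Ici
  have hRset : (∑ p ∈ tEN, f p) ⁻¹' Ici (-κ) = {ω | -κ ≤ ∑ n ∈ t, S.X (y i n) n ω} := by
    ext ω
    simp only [mem_preimage, mem_Ici, mem_setOf_eq, hRfun ω]
  have hXset : f (i, n₀ i) ⁻¹' Ici (z + κ) = {ω | z + κ ≤ S.X i (n₀ i) ω} := rfl
  rw [hRset, hXset] at hmul
  -- independence of B and the X-events
  have hBmeasSet : MeasurableSet {p : (ℕ → E) × ℕ | p.2 = m i ∧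
      ∀ n ∈ Finset.Icc 1 (m i), p.1 n = y i n} := by
    have heq : {p : (ℕ → E) × ℕ | p.2 = m i ∧ ∀ n ∈ Finset.Icc 1 (m i), p.1 n = y i n}
        = (Prod.snd ⁻¹' {m i}) ∩
          ⋂ n ∈ Finset.Icc 1 (m i), (fun p : (ℕ → E) × ℕ => p.1 n) ⁻¹' {y i n} := by
      ext p
      simp [Set.mem_iInter]
    rw [heq]
    exact (measurable_snd (measurableSet_singleton _)).inter
      (MeasurableSet.biInter (Set.to_countable _) fun n _ =>
        ((measurable_pi_apply n).comp measurable_fst) (measurableSet_singleton _))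
  have hGmeasSet : MeasurableSet {F : E × ℕ → ℝ | z + κ ≤ F (i, n₀ i) ∧
      -κ ≤ ∑ n ∈ t, F (y i n, n)} := by
    have heq : {F : E × ℕ → ℝ | z + κ ≤ F (i, n₀ i) ∧ -κ ≤ ∑ n ∈ t, F (y i n, n)}
        = ((fun F : E × ℕ → ℝ => F (i, n₀ i)) ⁻¹' Ici (z + κ)) ∩
          ((fun F : E × ℕ → ℝ => ∑ n ∈ t, F (y i n, n)) ⁻¹' Ici (-κ)) := rfl
    rw [heq]
    have hsum : Measurable (fun F : E × ℕ → ℝ => ∑ n ∈ t, F (y i n, n)) :=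
      Finset.measurable_sum t (fun n _ => measurable_pi_apply (y i n, n))
    exact ((measurable_pi_apply _) measurableSet_Ici).inter (hsum measurableSet_Ici)
  have hYN := S.indepYN.measure_inter_preimage_eq_mul _ _ hBmeasSet hGmeasSet
  have hpre1 : (fun ω => ((fun n => S.Y n ω), S.N ω)) ⁻¹'
      {p : (ℕ → E) × ℕ | p.2 = m i ∧ ∀ n ∈ Finset.Icc 1 (m i), p.1 n = y i n} = B i := rfl
  have hpre2 : (fun ω (p : E × ℕ) => S.X p.1 p.2 ω) ⁻¹'
      {F : E × ℕ → ℝ | z + κ ≤ F (i, n₀ i) ∧ -κ ≤ ∑ n ∈ t, F (y i n, n)}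
      = {ω | z + κ ≤ S.X i (n₀ i) ω} ∩ {ω | -κ ≤ ∑ n ∈ t, S.X (y i n) n ω} := rfl
  rw [hpre1, hpre2] at hYN
  -- inclusion into the target event
  have hsubZ : B i ∩ ({ω | z + κ ≤ S.X i (n₀ i) ω} ∩
      {ω | -κ ≤ ∑ n ∈ t, S.X (y i n) n ω}) ⊆ {ω | z ≤ S.Z ω} := by
    rintro ω ⟨⟨hN, hY⟩, hX, hR⟩
    simp only [mem_setOf_eq] at hX hR ⊢
    have hZ : S.Z ω = S.X i (n₀ i) ω + ∑ n ∈ t, S.X (y i n) n ω := by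
      show (∑ n ∈ Finset.Icc 1 (S.N ω), S.X (S.Y n ω) n ω) = _
      rw [hN, Finset.sum_congr rfl (fun n hn => by rw [hY n hn]),
        ← Finset.add_sum_erase _ _ (Finset.mem_Icc.2 ⟨hn₀1 i, hn₀2 i⟩), hyn₀ i, htdef]
    rw [hZ]
    linarith
  -- put everything together
  calc a j * law i (Ici (z + κ)) ≤ a i * law i (Ici (z + κ)) :=
        mul_le_mul_left (hj i (Finset.mem_univ i)) _
    _ = P (B i) * (law i (Ici (z + κ)) *
        P {ω | -(k i : ℝ) ≤ ∑ n ∈ t, S.X (y i n) n ω}) := by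
        rw [hadef]; ring
    _ ≤ P (B i) * (law i (Ici (z + κ)) * P {ω | -κ ≤ ∑ n ∈ t, S.X (y i n) n ω}) := by
        exact mul_le_mul_right (mul_le_mul_right (measure_mono hRsub) _) _
    _ = P (B i) * (P {ω | -κ ≤ ∑ n ∈ t, S.X (y i n) n ω} *
        P {ω | z + κ ≤ S.X i (n₀ i) ω}) := by rw [hlawX]; ring
    _ = P (B i) * P ({ω | z + κ ≤ S.X i (n₀ i) ω} ∩
        {ω | -κ ≤ ∑ n ∈ t, S.X (y i n) n ω}) := by
        rw [← hmul, Set.inter_comm]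
    _ = P (B i ∩ ({ω | z + κ ≤ S.X i (n₀ i) ω} ∩
        {ω | -κ ≤ ∑ n ∈ t, S.X (y i n) n ω})) := hYN.symm
    _ ≤ P {ω | z ≤ S.Z ω} := measure_mono hsubZ
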